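/- Let n ≥ 2 and 1 ≤ p ≤ n−1, and let λ ∈ ℝ^n satisfy λ_1 ≤ λ_2 ≤ ⋯ ≤ λ_n and λ_1 + ⋯ + λ_p > 0. Then each factor λ_n + λ_{i1} + ⋯ + λ_{i_{p−1}} with 1 ≤ i1 < ⋯ < i_{p−1} ≤ n−1 is at least λ_1 + ⋯ + λ_p > 0, and M_p^n(λ) ≥ (λ_1 + ⋯ + λ_p)^{C(n,p) − C(n−1,p−1)} · ∏_{1 ≤ i1 < ⋯ < i_{p−1} ≤ n−1} (λ_n + λ_{i1} + ⋯ + λ_{i_{p−1}}), where C(a,b) = a!/(b!(a−b)!) and the product runs over all (p−1)-element subsets of {1,…,n−1}. -/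

import Mathlib

open Finset

/-- The cone `𝒫_p ⊆ ℝ^n`: every sum of `p` pairwise distinct components is positive. -/
theorem le_apply_emb (n p : ℕ) (f : Fin p ↪o Fin n) (k : Fin p) : (k : ℕ) ≤ (f k : ℕ) := by
  obtain ⟨m, hm⟩ := k
  induction m with
  | zero => simp
  | succ m ih =>
    have hm' : m < p := by omega
    have h1 := ih hm'
    have h2 : (f ⟨m, hm'⟩ : ℕ) < (f ⟨m + 1, hm⟩ : ℕ) := f.strictMono (by simp [Fin.lt_def])
    simp only [Fin.val_mk] at h1 ⊢
    omega

theorem min_sum (n p : ℕ) (hpn : p ≤ n) (lam : Fin n → ℝ) (hmono : Monotone lam)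
    (S : Finset (Fin n)) (hS : S.card = p) :
    ∑ i ∈ Finset.univ.filter (fun i : Fin n => (i : ℕ) < p), lam i ≤ ∑ i ∈ S, lam i := by
  have hSeq : S = Finset.univ.map (S.orderEmbOfFin hS).toEmbedding := by
    symm
    apply Finset.eq_of_subset_of_card_le
    · intro x hx
      simp only [Finset.mem_map] at hx
      obtain ⟨k, _, rfl⟩ := hx
      exact Finset.orderEmbOfFin_mem S hS k
    · simp [hS]
  have hA : Finset.univ.filter (fun i : Fin n => (i : ℕ) < p)
      = Finset.univ.map (Fin.castLEEmb hpn) := by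
    ext i
    simp only [Finset.mem_filter, Finset.mem_univ, true_and, Finset.mem_map,
      RelEmbedding.coe_toEmbedding, Fin.castLEEmb, Fin.coe_castLE]
    constructor
    · intro h
      exact ⟨⟨i, h⟩, rfl⟩
    · rintro ⟨k, rfl⟩
      simp
  rw [hSeq, hA, Finset.sum_map, Finset.sum_map]
  apply Finset.sum_le_sum
  intro k _
  apply hmono
  show Fin.castLE hpn k ≤ S.orderEmbOfFin hS k
  rw [Fin.le_def]
  simpa using le_apply_emb n p (S.orderEmbOfFin hS) k


def Pcone (n p : ℕ) : Set (Fin n → ℝ) :=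
  {lam | ∀ S : Finset (Fin n), S.card = p → 0 < ∑ i ∈ S, lam i}

/-- `M_p^n(λ) = ∏_{|S| = p} ∑_{i ∈ S} λ_i`. -/
def Mpn (n p : ℕ) (lam : Fin n → ℝ) : ℝ :=
  ∏ S ∈ Finset.univ.powersetCard p, ∑ i ∈ S, lam i

/-- `F(λ) = (M_p^n(λ))^{1/C(n,p)}`. -/
noncomputable def Fpn (n p : ℕ) (lam : Fin n → ℝ) : ℝ :=
  Mpn n p lam ^ ((n.choose p : ℝ)⁻¹)

/-- `F_i(λ) = ∂F/∂λ_i (λ)`. -/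
noncomputable def Fi (n p : ℕ) (lam : Fin n → ℝ) (i : Fin n) : ℝ :=
  fderiv ℝ (Fpn n p) lam (Pi.single i 1)

/-- For sorted `λ` with positive sum of the first `p` components and
`1 ≤ p ≤ n - 1`, each factor `λ_n + λ_{i_1} + ⋯ + λ_{i_{p-1}}` over `(p-1)`-subsets of the
first `n - 1` indices is at least `λ_1 + ⋯ + λ_p`, and `M_p^n(λ)` is bounded below by the
product of these factors times `(λ_1 + ⋯ + λ_p)^(C(n,p) - C(n-1,p-1))`. -/
theorem Mpn_factorization_lower_bound (n p : ℕ) (hn : 2 ≤ n) (hp1 : 1 ≤ p)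
    (hpn : p ≤ n - 1) (lam : Fin n → ℝ) (hsorted : Monotone lam)
    (hpos : 0 < ∑ i ∈ Finset.univ.filter (fun i : Fin n => (i : ℕ) < p), lam i) :
    (∀ T ∈ (Finset.univ.filter (fun i : Fin n => (i : ℕ) < n - 1)).powersetCard (p - 1),
      ∑ i ∈ Finset.univ.filter (fun i : Fin n => (i : ℕ) < p), lam i ≤
        lam ⟨n - 1, by omega⟩ + ∑ j ∈ T, lam j) ∧
    (∑ i ∈ Finset.univ.filter (fun i : Fin n => (i : ℕ) < p), lam i) ^
        (n.choose p - (n - 1).choose (p - 1)) *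
      ∏ T ∈ (Finset.univ.filter (fun i : Fin n => (i : ℕ) < n - 1)).powersetCard (p - 1),
        (lam ⟨n - 1, by omega⟩ + ∑ j ∈ T, lam j) ≤ Mpn n p lam := by
  set s := ∑ i ∈ Finset.univ.filter (fun i : Fin n => (i : ℕ) < p), lam i with hs
  set m : Fin n := ⟨n - 1, by omega⟩ with hm
  set B := Finset.univ.filter (fun i : Fin n => (i : ℕ) < n - 1) with hB
  have hpn' : p ≤ n := by omega
  have hmB : m ∉ B := by simp [hB, hm]
  -- claim 1
  have claim1 : ∀ T ∈ B.powersetCard (p - 1), s ≤ lam m + ∑ j ∈ T, lam j := by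
    intro T hT
    rw [Finset.mem_powersetCard] at hT
    have hmT : m ∉ T := fun h => hmB (hT.1 h)
    have hcard : (insert m T).card = p := by
      rw [Finset.card_insert_of_notMem hmT, hT.2]; omega
    have := min_sum n p hpn' lam hsorted (insert m T) hcard
    rwa [Finset.sum_insert hmT] at this
  refine ⟨claim1, ?_⟩
  -- the bijection between (p-1)-subsets of B and p-subsets containing m
  have hbij : ∀ (f : Finset (Fin n) → ℝ),
      ∏ T ∈ B.powersetCard (p - 1), f (insert m T)
        = ∏ S ∈ (Finset.univ.powersetCard p).filter (fun S => m ∈ S), f S := by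
    intro f
    apply Finset.prod_nbij' (fun T => insert m T) (fun S => S.erase m)
    · intro T hT
      rw [Finset.mem_powersetCard] at hT
      have hmT : m ∉ T := fun h => hmB (hT.1 h)
      simp only [Finset.mem_filter, Finset.mem_powersetCard]
      refine ⟨⟨Finset.subset_univ _, ?_⟩, Finset.mem_insert_self _ _⟩
      rw [Finset.card_insert_of_notMem hmT, hT.2]; omega
    · intro S hS
      simp only [Finset.mem_filter, Finset.mem_powersetCard] at hS
      rw [Finset.mem_powersetCard]
      constructor
      · intro i hi
        rw [Finset.mem_erase] at hi
        simp only [hB, Finset.mem_filter, Finset.mem_univ, true_and]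
        have : (i : ℕ) < n := i.isLt
        have : (i : ℕ) ≠ n - 1 := fun h => hi.1 (Fin.ext h)
        omega
      · rw [Finset.card_erase_of_mem hS.2, hS.1.2]
    · intro T hT
      rw [Finset.mem_powersetCard] at hT
      exact Finset.erase_insert (fun h => hmB (hT.1 h))
    · intro S hS
      simp only [Finset.mem_filter] at hS
      exact Finset.insert_erase hS.2
    · intros; rfl
  -- cardinalities
  have hBcard : B.card = n - 1 := by
    have : B = Finset.univ.erase m := by
      ext i
      simp only [hB, Finset.mem_filter, Finset.mem_univ, true_and, Finset.mem_erase, and_true]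
      constructor
      · intro h h'; rw [h'] at h; simp [hm] at h
      · intro h
        have hlt : (i : ℕ) < n := i.isLt
        have : (i : ℕ) ≠ n - 1 := fun hh => h (Fin.ext hh)
        omega
    rw [this, Finset.card_erase_of_mem (Finset.mem_univ m)]
    simp
  have hcard1 : ((Finset.univ.powersetCard p).filter (fun S => m ∈ S)).card
      = (n - 1).choose (p - 1) := by
    have := hbij (fun _ => (1 : ℝ))
    -- use card_nbij' instead
    have hc : (B.powersetCard (p - 1)).card = (n - 1).choose (p - 1) := by
      rw [Finset.card_powersetCard, hBcard]
    rw [← hc]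
    symm
    apply Finset.card_nbij' (fun T => insert m T) (fun S => S.erase m)
    · intro T hT
      rw [Finset.mem_coe, Finset.mem_powersetCard] at hT
      have hmT : m ∉ T := fun h => hmB (hT.1 h)
      simp only [Finset.mem_coe, Finset.mem_filter, Finset.mem_powersetCard]
      refine ⟨⟨Finset.subset_univ _, ?_⟩, Finset.mem_insert_self _ _⟩
      rw [Finset.card_insert_of_notMem hmT, hT.2]; omega
    · intro S hS
      simp only [Finset.mem_coe, Finset.mem_filter, Finset.mem_powersetCard] at hS
      simp only [Finset.mem_coe]; rw [Finset.mem_powersetCard]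
      constructor
      · intro i hi
        rw [Finset.mem_erase] at hi
        simp only [hB, Finset.mem_filter, Finset.mem_univ, true_and]
        have : (i : ℕ) < n := i.isLt
        have : (i : ℕ) ≠ n - 1 := fun h => hi.1 (Fin.ext h)
        omega
      · rw [Finset.card_erase_of_mem hS.2, hS.1.2]
    · intro T hT
      rw [Finset.mem_coe, Finset.mem_powersetCard] at hT
      exact Finset.erase_insert (fun h => hmB (hT.1 h))
    · intro S hS
      simp only [Finset.mem_coe, Finset.mem_filter] at hS
      exact Finset.insert_erase hS.2
  have htotal : (Finset.univ.powersetCard p : Finset (Finset (Fin n))).card = n.choose p := by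
    rw [Finset.card_powersetCard]; simp
  have hcard2 : ((Finset.univ.powersetCard p).filter (fun S => m ∉ S)).card
      = n.choose p - (n - 1).choose (p - 1) := by
    have := Finset.card_filter_add_card_filter_not
      (s := (Finset.univ.powersetCard p : Finset (Finset (Fin n)))) (p := fun S => m ∈ S)
    rw [htotal, hcard1] at this
    omega
  -- split the product
  have hsplit : Mpn n p lam
      = (∏ S ∈ (Finset.univ.powersetCard p).filter (fun S => m ∈ S), ∑ i ∈ S, lam i)
        * ∏ S ∈ (Finset.univ.powersetCard p).filter (fun S => m ∉ S), ∑ i ∈ S, lam i := by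
    rw [Mpn, ← Finset.prod_filter_mul_prod_filter_not _ (fun S => m ∈ S)]
  -- product over T equals product over subsets containing m
  have hprodT : ∏ T ∈ B.powersetCard (p - 1), (lam m + ∑ j ∈ T, lam j)
      = ∏ S ∈ (Finset.univ.powersetCard p).filter (fun S => m ∈ S), ∑ i ∈ S, lam i := by
    rw [← hbij (fun S => ∑ i ∈ S, lam i)]
    apply Finset.prod_congr rfl
    intro T hT
    rw [Finset.mem_powersetCard] at hT
    rw [Finset.sum_insert (fun h => hmB (hT.1 h))]
  -- lower bound on product over subsets not containing m
  have hlow : s ^ (n.choose p - (n - 1).choose (p - 1))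
      ≤ ∏ S ∈ (Finset.univ.powersetCard p).filter (fun S => m ∉ S), ∑ i ∈ S, lam i := by
    rw [← hcard2, ← Finset.prod_const]
    apply Finset.prod_le_prod
    · intro S _; exact le_of_lt hpos
    · intro S hS
      simp only [Finset.mem_filter, Finset.mem_powersetCard] at hS
      exact min_sum n p hpn' lam hsorted S hS.1.2
  have hTnonneg : (0:ℝ) ≤ ∏ T ∈ B.powersetCard (p - 1), (lam m + ∑ j ∈ T, lam j) := by
    apply Finset.prod_nonneg
    intro T hT
    exact le_trans (le_of_lt hpos) (claim1 T hT)
  calc s ^ (n.choose p - (n - 1).choose (p - 1))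
        * ∏ T ∈ B.powersetCard (p - 1), (lam m + ∑ j ∈ T, lam j)
      ≤ (∏ S ∈ (Finset.univ.powersetCard p).filter (fun S => m ∉ S), ∑ i ∈ S, lam i)
        * ∏ T ∈ B.powersetCard (p - 1), (lam m + ∑ j ∈ T, lam j) :=
        mul_le_mul_of_nonneg_right hlow hTnonneg
    _ = Mpn n p lam := by rw [hprodT, hsplit, mul_comm]
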